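/- Let N, m ∈ ℕ with m < N and let w = (w_i)_{i=1}^N be a vector of positive weights with nonincreasing rearrangement w_{(1)} ≥ w_{(2)} ≥ … ≥ w_{(N)}. Then for every adaptive sampling operator Γ : ℓ^2_N → ℝ^m and every map Δ : ℝ^m → ℝ^N, the worst-case ℓ^2 recovery error over the weighted ℓ^∞ ball satisfies sup_{x ∈ B^∞_N(w)} ‖x − Δ(Γ(x))‖_2 ≥ ( ∑_{j=m+1}^{N} w_{(j)}^2 )^{1/2}. -/

import Mathlib

open Finset

noncomputable section

lemma aux_sum_le {g : ℕ → ℝ} (hg : ∀ a b : ℕ, a ≤ b → g b ≤ g a) (C : Finset ℕ) :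
    ∑ i ∈ C, g i ≤ ∑ k ∈ Finset.range C.card, g k := by
  induction C using Finset.strongInduction with
  | _ C ih =>
    rcases C.eq_empty_or_nonempty with rfl | hC
    · simp
    · have haC : C.max' hC ∈ C := C.max'_mem hC
      set a := C.max' hC with ha
      have hsub : C ⊆ Finset.range (a + 1) :=
        fun b hb => Finset.mem_range.2 (Nat.lt_succ_of_le (C.le_max' b hb))
      have hcard : C.card ≤ a + 1 := by
        simpa using Finset.card_le_card hsub
      have hpos : 1 ≤ C.card := Finset.card_pos.2 hC
      have h1 : C.card - 1 ≤ a := by omega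
      have hstep := ih (C.erase a) (Finset.erase_ssubset haC)
      have hce : (C.erase a).card = C.card - 1 := Finset.card_erase_of_mem haC
      calc ∑ i ∈ C, g i = ∑ i ∈ C.erase a, g i + g a := (Finset.sum_erase_add C g haC).symm
        _ ≤ ∑ k ∈ Finset.range (C.card - 1), g k + g (C.card - 1) := by
            refine add_le_add ?_ (hg _ _ h1)
            rw [← hce]; exact hstep
        _ = ∑ k ∈ Finset.range C.card, g k := by
            have hc1 : C.card - 1 + 1 = C.card := by omega
            rw [← hc1, Finset.sum_range_succ]
            norm_num

lemma aux2 {N m : ℕ} (hmN : m ≤ N) (g : Fin N → ℝ) (hg0 : ∀ j, 0 ≤ g j)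
    (hg : ∀ i j : Fin N, i ≤ j → g j ≤ g i) (C : Finset (Fin N)) (hC : C.card ≤ m) :
    ∑ j ∈ C, g j ≤ ∑ j ∈ Finset.univ.filter (fun j : Fin N => (j : ℕ) < m), g j := by
  set gh : ℕ → ℝ := fun k => if h : k < N then g ⟨k, h⟩ else 0 with hgh
  have hgh0 : ∀ k, 0 ≤ gh k := by
    intro k; by_cases h : k < N <;> simp [hgh, h, hg0]
  have hghanti : ∀ a b : ℕ, a ≤ b → gh b ≤ gh a := by
    intro a b hab
    by_cases hb : b < N
    · have ha : a < N := lt_of_le_of_lt hab hb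
      simpa [hgh, ha, hb] using hg ⟨a, ha⟩ ⟨b, hb⟩ hab
    · simp only [hgh, dif_neg hb]
      exact hgh0 a
  have h1 : ∑ j ∈ C, g j = ∑ k ∈ C.image Fin.val, gh k := by
    rw [Finset.sum_image (fun a _ b _ h => Fin.val_injective h)]
    exact Finset.sum_congr rfl fun j _ => by simp [hgh, j.isLt]
  have h2 : ∑ k ∈ C.image Fin.val, gh k ≤ ∑ k ∈ Finset.range ((C.image Fin.val).card), gh k :=
    aux_sum_le hghanti _
  have h3 : ∑ k ∈ Finset.range ((C.image Fin.val).card), gh k ≤ ∑ k ∈ Finset.range m, gh k := by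
    refine Finset.sum_le_sum_of_subset_of_nonneg ?_ fun k _ _ => hgh0 k
    exact Finset.range_subset_range.2 (le_trans (Finset.card_image_le) hC)
  have himg : (Finset.univ.filter (fun j : Fin N => (j : ℕ) < m)).image Fin.val
      = Finset.range m := by
    ext k
    simp only [Finset.mem_image, Finset.mem_filter, Finset.mem_univ, true_and, Finset.mem_range]
    constructor
    · rintro ⟨j, hj, rfl⟩; exact hj
    · intro hk; exact ⟨⟨k, lt_of_lt_of_le hk hmN⟩, hk, rfl⟩
  have h4 : ∑ k ∈ Finset.range m, gh k
      = ∑ j ∈ Finset.univ.filter (fun j : Fin N => (j : ℕ) < m), g j := by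
    rw [← himg, Finset.sum_image (fun a _ b _ h => Fin.val_injective h)]
    exact Finset.sum_congr rfl fun j _ => by simp [hgh, j.isLt]
  linarith

lemma boxmax {N m : ℕ} (w : Fin N → ℝ) (hw : ∀ i, 0 < w i)
    (φ : EuclideanSpace ℝ (Fin N) →ₗ[ℝ] (Fin m → ℝ)) :
    ∃ x : EuclideanSpace ℝ (Fin N), φ x = 0 ∧ (∀ i, |x i| ≤ w i) ∧
      (Finset.univ.filter (fun i : Fin N => |x i| < w i)).card ≤ m := by
  classical
  set B : Set (EuclideanSpace ℝ (Fin N)) :=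
    {x | φ x = 0} ∩ ⋂ i, {x | |x i| ≤ w i} with hB
  have hmemB : ∀ x, x ∈ B ↔ φ x = 0 ∧ ∀ i, |x i| ≤ w i := by
    intro x; simp [hB, Set.mem_iInter]
  have hφcont : Continuous φ := φ.continuous_of_finiteDimensional
  have hproj : ∀ i : Fin N, Continuous fun x : EuclideanSpace ℝ (Fin N) => x i :=
    fun i => (EuclideanSpace.proj (𝕜 := ℝ) i).continuous
  have hBclosed : IsClosed B := by
    refine (isClosed_singleton.preimage hφcont).inter (isClosed_iInter fun i => ?_)
    exact isClosed_le ((hproj i).abs) continuous_const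
  have hBbdd : Bornology.IsBounded B := by
    rw [Metric.isBounded_iff_subset_closedBall 0]
    refine ⟨Real.sqrt (∑ i, (w i)^2), fun x hx => ?_⟩
    rw [Metric.mem_closedBall, dist_zero_right, EuclideanSpace.norm_eq]
    refine Real.sqrt_le_sqrt (Finset.sum_le_sum fun i _ => ?_)
    rw [Real.norm_eq_abs]
    have := (hmemB x).1 hx
    exact pow_le_pow_left₀ (abs_nonneg _) (this.2 i) 2
  have hBcompact : IsCompact B := Metric.isCompact_of_isClosed_isBounded hBclosed hBbdd
  have hB0 : (0 : EuclideanSpace ℝ (Fin N)) ∈ B := by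
    rw [hmemB]
    refine ⟨map_zero φ, fun i => ?_⟩
    simp [(hw i).le]
  set f : EuclideanSpace ℝ (Fin N) → ℝ := fun x => ∑ i, (x i)^2 with hf
  have hfcont : Continuous f := by
    exact continuous_finset_sum _ fun i _ => (hproj i).pow 2
  obtain ⟨x, hxB, hmax⟩ := hBcompact.exists_isMaxOn ⟨0, hB0⟩ hfcont.continuousOn
  obtain ⟨hxker, hxbox⟩ := (hmemB x).1 hxB
  refine ⟨x, hxker, hxbox, ?_⟩
  by_contra hF
  push_neg at hF
  set F : Finset (Fin N) := Finset.univ.filter (fun i => |x i| < w i) with hFdef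
  -- find a nonzero z in ker φ supported on F
  set ι : ((↥F : Type) → ℝ) →ₗ[ℝ] EuclideanSpace ℝ (Fin N) :=
    { toFun := fun z => WithLp.toLp 2 fun i => if h : i ∈ F then z ⟨i, h⟩ else 0
      map_add' := by
        intro a b; ext i; by_cases h : i ∈ F <;>
          simp [h, PiLp.add_apply]
      map_smul' := by
        intro c a; ext i; by_cases h : i ∈ F <;>
          simp [h, PiLp.smul_apply] } with hι
  have hker_ne : LinearMap.ker (φ.comp ι) ≠ ⊥ := by
    intro hbot
    have hinj : Function.Injective (φ.comp ι) := LinearMap.ker_eq_bot.1 hbot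
    have := LinearMap.finrank_le_finrank_of_injective hinj
    rw [Module.finrank_fintype_fun_eq_card, Module.finrank_fintype_fun_eq_card,
      Fintype.card_coe, Fintype.card_fin] at this
    omega
  obtain ⟨z0, hz0ker, hz0ne⟩ := (Submodule.ne_bot_iff _).1 hker_ne
  have hz0ker' : φ (ι z0) = 0 := hz0ker
  obtain ⟨j0, hj0⟩ : ∃ j, z0 j ≠ 0 := by
    by_contra h; push_neg at h; exact hz0ne (funext h)
  have hzsupp : ∀ i, i ∉ F → (ι z0) i = 0 := by
    intro i hi; simp [hι, hi]
  have hzval : (ι z0) (j0 : Fin N) = z0 j0 := by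
    simp [hι, j0.2]
  have hzpos : 0 < ∑ i, ((ι z0) i)^2 := by
    refine Finset.sum_pos' (fun i _ => sq_nonneg _) ⟨(j0 : Fin N), Finset.mem_univ _, ?_⟩
    rw [hzval]; positivity
  -- choose sign
  obtain ⟨z, hzker, hzsupp', hzpos', hzdot⟩ :
      ∃ z : EuclideanSpace ℝ (Fin N), φ z = 0 ∧ (∀ i, i ∉ F → z i = 0) ∧
        (0 < ∑ i, (z i)^2) ∧ 0 ≤ ∑ i, x i * z i := by
    rcases le_or_gt 0 (∑ i, x i * (ι z0) i) with hc | hc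
    · exact ⟨ι z0, hz0ker', hzsupp, hzpos, hc⟩
    · refine ⟨-(ι z0), by rw [map_neg, hz0ker', neg_zero], fun i hi => ?_, ?_, ?_⟩
      · simp [PiLp.neg_apply, hzsupp i hi]
      · simpa [PiLp.neg_apply] using hzpos
      · have hs : ∑ i, x i * (-(ι z0)) i = -(∑ i, x i * (ι z0) i) := by
          rw [← Finset.sum_neg_distrib]
          exact Finset.sum_congr rfl fun i _ => by rw [PiLp.neg_apply]; ring
        rw [hs]; linarith
  -- perturbation
  have hFne : F.Nonempty := Finset.card_pos.1 (by omega)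
  set eps : ℝ := F.inf' hFne (fun i => w i - |x i|) with heps
  have hepspos : 0 < eps := by
    rw [heps, Finset.lt_inf'_iff]
    intro i hi
    have : |x i| < w i := (Finset.mem_filter.1 hi).2
    linarith
  have hepsle : ∀ i ∈ F, eps ≤ w i - |x i| := fun i hi => Finset.inf'_le _ hi
  set S : ℝ := ∑ i, |z i| with hS
  have hS0 : 0 ≤ S := Finset.sum_nonneg fun i _ => abs_nonneg _
  have hSle : ∀ i, |z i| ≤ S :=
    fun i => Finset.single_le_sum (fun j _ => abs_nonneg (z j)) (Finset.mem_univ i)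
  set t : ℝ := eps / (S + 1) with ht
  have htpos : 0 < t := div_pos hepspos (by linarith)
  have htz : ∀ i, t * |z i| ≤ eps := by
    intro i
    have h1 : t * |z i| ≤ t * (S + 1) := by
      refine mul_le_mul_of_nonneg_left ?_ htpos.le
      linarith [hSle i]
    have h2 : t * (S + 1) = eps := by
      rw [ht]; field_simp
    linarith
  set x' : EuclideanSpace ℝ (Fin N) := x + t • z with hx'
  have hx'app : ∀ i, x' i = x i + t * z i := by
    intro i; simp [hx', PiLp.add_apply, PiLp.smul_apply, smul_eq_mul]
  have hx'B : x' ∈ B := by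
    rw [hmemB]
    constructor
    · rw [hx', map_add, map_smul, hxker, hzker, smul_zero, add_zero]
    · intro i
      rw [hx'app]
      by_cases hi : i ∈ F
      · have h1 : |x i + t * z i| ≤ |x i| + t * |z i| := by
          calc |x i + t * z i| ≤ |x i| + |t * z i| := abs_add_le _ _
            _ = |x i| + t * |z i| := by rw [abs_mul, abs_of_pos htpos]
        have := htz i
        have := hepsle i hi
        linarith
      · rw [hzsupp' i hi, mul_zero, add_zero]; exact hxbox i
  have hexpand : f x' = f x + 2 * t * (∑ i, x i * z i) + t^2 * (∑ i, (z i)^2) := by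
    have h : ∀ i : Fin N, (x' i)^2 = (x i)^2 + (2*t)*(x i * z i) + t^2*(z i)^2 := by
      intro i; rw [hx'app i]; ring
    simp only [hf]
    rw [Finset.sum_congr rfl fun i _ => h i, Finset.sum_add_distrib,
      Finset.sum_add_distrib, ← Finset.mul_sum, ← Finset.mul_sum]
  have hlt : f x < f x' := by
    rw [hexpand]
    have h1 : 0 ≤ 2 * t * (∑ i, x i * z i) := by positivity
    have h2 : 0 < t^2 * (∑ i, (z i)^2) := by positivity
    linarith
  exact absurd (hmax hx'B) (not_le.2 hlt)



/-- `Γ : X → ℝ^m` is an adaptive sampling operator: there are maps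
`L i : X × ℝ^i → ℝ`, bounded and linear in the first argument, such that the `i`-th
sample `Γ(x) i` equals `L i` applied to `x` and the previous samples. -/
def IsAdaptive {X : Type*} [NormedAddCommGroup X] [NormedSpace ℝ X] {m : ℕ}
    (Γ : X → (Fin m → ℝ)) : Prop :=
  ∃ L : (i : Fin m) → X → (Fin i.val → ℝ) → ℝ,
    (∀ i v, IsBoundedLinearMap ℝ fun x => L i x v) ∧
    ∀ x i, Γ x i = L i x fun j => Γ x ⟨j.val, j.isLt.trans i.isLt⟩

/-- if `w` is a vector of positive weights with nonincreasing
rearrangement `w ∘ σ`, then for every adaptive sampling operator `Γ : ℓ²_N → ℝ^m`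
and every reconstruction map `Δ : ℝ^m → ℓ²_N`, the worst-case `ℓ²` recovery error
over the weighted `ℓ^∞` ball `B^∞_N(w) = {x : |x i| ≤ w i ∀ i}` is at least
`(∑_{j=m+1}^N w_{(j)}²)^{1/2}`; indeed this value is attained: there is an `x` in
the ball whose recovery error is at least that value. -/
theorem statement5 {N m : ℕ} (hm : m < N) (w : Fin N → ℝ) (hw : ∀ i, 0 < w i)
    (σ : Equiv.Perm (Fin N)) (hσ : ∀ i j : Fin N, i ≤ j → w (σ j) ≤ w (σ i))
    (Γ : EuclideanSpace ℝ (Fin N) → (Fin m → ℝ)) (hΓ : IsAdaptive Γ)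
    (Δ : (Fin m → ℝ) → EuclideanSpace ℝ (Fin N)) :
    ∃ x : EuclideanSpace ℝ (Fin N), (∀ i, |x i| ≤ w i) ∧
      (∑ j ∈ Finset.univ.filter (fun j : Fin N => m ≤ (j : ℕ)), w (σ j) ^ 2) ^ (1/2 : ℝ) ≤
        ‖x - Δ (Γ x)‖ := by
  classical
  obtain ⟨L, hLb, hL⟩ := hΓ
  set φ : EuclideanSpace ℝ (Fin N) →ₗ[ℝ] (Fin m → ℝ) :=
    LinearMap.pi (fun i => IsLinearMap.mk' (fun x => L i x (fun _ => 0))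
      (hLb i (fun _ => 0)).toIsLinearMap) with hφ
  have hφapp : ∀ x i, φ x i = L i x (fun _ => 0) := by
    intro x i; simp [hφ]
  -- any y with φ y = 0 has Γ y = 0
  have hΓ0 : ∀ y : EuclideanSpace ℝ (Fin N), φ y = 0 → ∀ i, Γ y i = 0 := by
    intro y hy
    have hy' : ∀ i, L i y (fun _ => 0) = 0 := by
      intro i; rw [← hφapp y i, hy]; rfl
    have H : ∀ n, ∀ i : Fin m, (i : ℕ) < n → Γ y i = 0 := by
      intro n
      induction n with
      | zero => exact fun i hi => absurd hi (Nat.not_lt_zero _)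
      | succ n ih =>
        intro i hi
        rw [hL y i]
        have h0 : (fun j : Fin i.val => Γ y ⟨j.val, j.isLt.trans i.isLt⟩)
            = (fun _ => (0 : ℝ)) := by
          funext j
          have hj := j.isLt
          exact ih ⟨j.val, j.isLt.trans i.isLt⟩ (show (j : ℕ) < n by omega)
        rw [h0]; exact hy' i
    exact fun i => H m i i.isLt
  obtain ⟨x, hxker, hxbox, hcard⟩ := boxmax w hw φ
  -- Γ x = Γ (-x) = 0
  have hΓx : Γ x = fun _ => 0 := funext fun i => hΓ0 x hxker i
  have hΓnx : Γ (-x) = fun _ => 0 := by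
    refine funext fun i => hΓ0 (-x) ?_ i
    rw [map_neg, hxker, neg_zero]
  -- sum inequality
  set g : Fin N → ℝ := fun j => w (σ j) ^ 2 with hg
  have hg0 : ∀ j, 0 ≤ g j := fun j => sq_nonneg _
  have hganti : ∀ i j : Fin N, i ≤ j → g j ≤ g i := by
    intro i j hij
    exact pow_le_pow_left₀ (hw _).le (hσ i j hij) 2
  set F : Finset (Fin N) := Finset.univ.filter (fun i => |x i| < w i) with hF
  have hsum1 : ∑ i ∈ F, w i ^ 2 ≤ ∑ j ∈ Finset.univ.filter (fun j : Fin N => (j : ℕ) < m), g j := by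
    have himg : ∑ j ∈ F.image σ.symm, g j = ∑ i ∈ F, w i ^ 2 := by
      rw [Finset.sum_image (fun a _ b _ h => σ.symm.injective h)]
      exact Finset.sum_congr rfl fun i _ => by simp [hg]
    rw [← himg]
    refine aux2 hm.le g hg0 hganti _ ?_
    exact le_trans Finset.card_image_le (le_of_eq_of_le rfl hcard)
  have htot : ∑ j : Fin N, g j = ∑ i : Fin N, w i ^ 2 := by
    exact Equiv.sum_comp σ (fun i => w i ^ 2)
  have hsplit1 : ∑ j ∈ Finset.univ.filter (fun j : Fin N => (j : ℕ) < m), g j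
      + ∑ j ∈ Finset.univ.filter (fun j : Fin N => m ≤ (j : ℕ)), g j = ∑ j : Fin N, g j := by
    rw [← Finset.sum_filter_add_sum_filter_not Finset.univ (fun j : Fin N => (j : ℕ) < m) g]
    congr 1
    exact Finset.sum_congr (by simp [not_lt]) fun _ _ => rfl
  have hsplit2 : ∑ i ∈ F, w i ^ 2 + ∑ i ∈ Fᶜ, w i ^ 2 = ∑ i : Fin N, w i ^ 2 :=
    Finset.sum_add_sum_compl F _
  have hsum2 : ∑ j ∈ Finset.univ.filter (fun j : Fin N => m ≤ (j : ℕ)), g j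
      ≤ ∑ i ∈ Fᶜ, w i ^ 2 := by linarith
  have hsum3 : ∑ i ∈ Fᶜ, w i ^ 2 ≤ ∑ i : Fin N, (x i) ^ 2 := by
    refine le_trans (Finset.sum_le_sum fun i hi => ?_)
      (Finset.sum_le_sum_of_subset_of_nonneg (Finset.subset_univ _) fun i _ _ => sq_nonneg _)
    have hi' : ¬ |x i| < w i := by
      simpa [hF] using (Finset.mem_compl.1 hi)
    have : |x i| = w i := le_antisymm (hxbox i) (not_lt.1 hi')
    rw [← this, sq_abs]
  -- norm bounds
  have hxnorm : (∑ j ∈ Finset.univ.filter (fun j : Fin N => m ≤ (j : ℕ)), w (σ j) ^ 2) ^ (1/2 : ℝ)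
      ≤ ‖x‖ := by
    rw [EuclideanSpace.norm_eq, ← Real.sqrt_eq_rpow]
    refine Real.sqrt_le_sqrt ?_
    calc ∑ j ∈ Finset.univ.filter (fun j : Fin N => m ≤ (j : ℕ)), w (σ j) ^ 2
        ≤ ∑ i : Fin N, (x i) ^ 2 := le_trans hsum2 hsum3
      _ = ∑ i : Fin N, ‖x i‖ ^ 2 := by
          exact Finset.sum_congr rfl fun i _ => by rw [Real.norm_eq_abs, sq_abs]
  set y := Δ (Γ x) with hy
  have hyn : Δ (Γ (-x)) = y := by rw [hΓnx, hy, hΓx]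
  have hkey : 2 * ‖x‖ ≤ ‖x - y‖ + ‖(-x) - y‖ := by
    have h1 : ‖(x - y) - ((-x) - y)‖ ≤ ‖x - y‖ + ‖(-x) - y‖ := norm_sub_le _ _
    have h2 : (x - y) - ((-x) - y) = (2 : ℝ) • x := by
      rw [two_smul]; abel
    rw [h2, norm_smul] at h1
    simpa using h1
  by_cases hc : ‖x‖ ≤ ‖x - y‖
  · exact ⟨x, hxbox, le_trans hxnorm hc⟩
  · refine ⟨-x, fun i => ?_, ?_⟩
    · rw [PiLp.neg_apply, abs_neg]; exact hxbox i
    · rw [hyn]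
      push_neg at hc
      exact le_trans hxnorm (by linarith)

end
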